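/- For every nonnegative integer n, t_n = (2n+1)!·∑_{k=0}^n binomial(2k,k)/(4^k·(2(n-k)+1)), where (t_n) is the sequence defined below. -/

import Mathlib

/-- The sequence `t_0 = 1`, `t_1 = 5`,
`t_{n+1} = (8n²+12n+5) t_n - 4n²(2n+1)² t_{n-1}` for `n ≥ 1`. -/
def t : ℕ → ℤ
  | 0 => 1
  | 1 => 5
  | (n + 2) => (8 * ((n : ℤ) + 1) ^ 2 + 12 * ((n : ℤ) + 1) + 5) * t (n + 1)
      - 4 * ((n : ℤ) + 1) ^ 2 * (2 * ((n : ℤ) + 1) + 1) ^ 2 * t n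

noncomputable def c (k : ℕ) : ℚ := ((2 * k).choose k : ℚ) / 4 ^ k

def d : ℕ → ℚ
  | 0 => 1
  | n + 1 => (2 * n + 1) * d n

lemma choose_cast_succ (k : ℕ) : ((k : ℚ) + 1) * ((2 * (k + 1)).choose (k + 1) : ℚ)
    = 2 * (2 * k + 1) * ((2 * k).choose k : ℚ) := by
  exact_mod_cast congrArg (Nat.cast : ℕ → ℚ) (Nat.succ_mul_centralBinom_succ k)

lemma c_succ (k : ℕ) : c (k + 1) * (2 * (k : ℚ) + 2) = (2 * k + 1) * c k := by
  unfold c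
  have h4 : (4 : ℚ) ^ k ≠ 0 := by positivity
  field_simp
  linear_combination (2 * (4 : ℚ) ^ k) * choose_cast_succ k

lemma c_zero : c 0 = 1 := by simp [c]

lemma tel (n : ℕ) : ∑ k ∈ Finset.range (n + 1), c k / (2 * (k : ℚ) + 2) = 1 - c (n + 1) := by
  induction n with
  | zero =>
      simp [c]
      norm_num
  | succ n ih =>
      rw [Finset.sum_range_succ, ih]
      have h := c_succ (n + 1)
      push_cast at h
      have hd : (2 * ((n : ℚ) + 1) + 2) ≠ 0 := by positivity
      field_simp
      push_cast
      linear_combination h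

noncomputable def T (n : ℕ) : ℚ := ∑ k ∈ Finset.range (n + 1), c k / (2 * ((n : ℚ) - (k : ℚ)) + 1)

lemma Sq_eq (n : ℕ) :
    (∑ k ∈ Finset.range (n + 1),
        ((2 * k).choose k : ℚ) / (4 ^ k * ((2 * (n - k) + 1 : ℕ) : ℚ))) = T n := by
  unfold T
  refine Finset.sum_congr rfl fun k hk => ?_
  have hk' : k ≤ n := Nat.lt_succ_iff.mp (Finset.mem_range.mp hk)
  have hcast : ((2 * (n - k) + 1 : ℕ) : ℚ) = 2 * ((n : ℚ) - (k : ℚ)) + 1 := by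
    push_cast [hk']
    ring
  rw [hcast, c, div_div]

lemma key (n : ℕ) : (2 * (n : ℚ) + 3) * T (n + 1) = (2 * n + 2) * T n + c (n + 1) := by
  have h1 : T (n + 1) = (∑ k ∈ Finset.range (n + 1),
      c (k + 1) / (2 * ((n : ℚ) - (k : ℚ)) + 1)) + 1 / (2 * (n : ℚ) + 3) := by
    unfold T
    rw [Finset.sum_range_succ']
    congr 1
    · refine Finset.sum_congr rfl fun k hk => ?_
      push_cast
      ring_nf
    · rw [c_zero]
      push_cast
      ring_nf
  rw [h1, mul_add]
  have h2 : (2 * (n : ℚ) + 3) * ∑ k ∈ Finset.range (n + 1),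
      c (k + 1) / (2 * ((n : ℚ) - (k : ℚ)) + 1)
      = (2 * (n : ℚ) + 2) * T n - (1 - c (n + 1)) := by
    rw [← tel n]
    unfold T
    rw [Finset.mul_sum, Finset.mul_sum, ← Finset.sum_sub_distrib]
    refine Finset.sum_congr rfl fun k hk => ?_
    have hk' : k ≤ n := Nat.lt_succ_iff.mp (Finset.mem_range.mp hk)
    have hd1 : 2 * ((n : ℚ) - (k : ℚ)) + 1 ≠ 0 := by
      have : (k : ℚ) ≤ (n : ℚ) := by exact_mod_cast hk'
      nlinarith
    have hd2 : 2 * (k : ℚ) + 2 ≠ 0 := by positivity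
    have hc := c_succ k
    field_simp
    linear_combination (2 * (n : ℚ) + 3) * hc
  rw [h2]
  have h3 : (2 * (n : ℚ) + 3) * (1 / (2 * (n : ℚ) + 3)) = 1 := by
    have : (2 * (n : ℚ) + 3) ≠ 0 := by positivity
    field_simp
  rw [h3]
  ring

lemma fac_cb (n : ℕ) : ((2 * n).factorial : ℚ) * ((2 * n).choose n : ℚ) = 4 ^ n * (d n) ^ 2 := by
  induction n with
  | zero => simp [d]
  | succ n ih =>
      have hf : ((2 * (n + 1)).factorial : ℚ)
          = (2 * n + 2) * (2 * n + 1) * ((2 * n).factorial : ℚ) := by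
        rw [show 2 * (n + 1) = 2 * n + 1 + 1 by ring, Nat.factorial_succ, Nat.factorial_succ]
        push_cast
        ring
      have hc := choose_cast_succ n
      have hd : d (n + 1) = (2 * (n : ℚ) + 1) * d n := rfl
      have hn1 : ((n : ℚ) + 1) ≠ 0 := by positivity
      apply mul_left_cancel₀ hn1
      rw [hd]
      linear_combination ((n : ℚ) + 1) * ((2 * (n + 1)).choose (n + 1) : ℚ) * hf
        + (2 * (n : ℚ) + 2) * (2 * n + 1) * ((2 * n).factorial : ℚ) * hc
        + 2 * (2 * (n : ℚ) + 1) * (2 * n + 2) * (2 * n + 1) * ih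

lemma t_rec (n : ℕ) : (t (n + 1) : ℚ) = 4 * ((n : ℚ) + 1) ^ 2 * (t n) + (d (n + 1)) ^ 2 := by
  induction n with
  | zero => norm_num [t, d]
  | succ n ih =>
      have ht : (t (n + 2) : ℚ) = (8 * ((n : ℚ) + 1) ^ 2 + 12 * ((n : ℚ) + 1) + 5) * (t (n + 1))
          - 4 * ((n : ℚ) + 1) ^ 2 * (2 * ((n : ℚ) + 1) + 1) ^ 2 * (t n) := by
        rw [show t (n + 2) = (8 * ((n : ℤ) + 1) ^ 2 + 12 * ((n : ℤ) + 1) + 5) * t (n + 1)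
          - 4 * ((n : ℤ) + 1) ^ 2 * (2 * ((n : ℤ) + 1) + 1) ^ 2 * t n from rfl]
        push_cast
        ring
      have hd : d (n + 2) = (2 * ((n : ℚ) + 1) + 1) * d (n + 1) := by
        show d (n + 2) = _
        rw [show d (n + 2) = (2 * ((n + 1 : ℕ) : ℚ) + 1) * d (n + 1) from rfl]
        push_cast
        ring
      rw [hd]
      push_cast
      linear_combination ht + (2 * (n : ℚ) + 3) ^ 2 * ih

theorem t_eq_factorial_sum (n : ℕ) :
    (t n : ℚ) = (Nat.factorial (2 * n + 1) : ℚ)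
      * ∑ k ∈ Finset.range (n + 1),
          ((2 * k).choose k : ℚ) / (4 ^ k * ((2 * (n - k) + 1 : ℕ) : ℚ)) := by
  induction n with
  | zero => norm_num [t, Finset.sum_range_one]
  | succ n ih =>
      rw [Sq_eq] at ih ⊢
      have hf : (Nat.factorial (2 * (n + 1) + 1) : ℚ)
          = (2 * n + 3) * (2 * n + 2) * (Nat.factorial (2 * n + 1) : ℚ) := by
        rw [show 2 * (n + 1) + 1 = 2 * n + 1 + 1 + 1 by ring, Nat.factorial_succ,
          Nat.factorial_succ]
        push_cast
        ring
      have hk := key n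
      have hcb : ((2 * (n + 1)).factorial : ℚ) * c (n + 1) = (d (n + 1)) ^ 2 := by
        have := fac_cb (n + 1)
        rw [c]
        have h4 : (4 : ℚ) ^ (n + 1) ≠ 0 := by positivity
        field_simp
        linear_combination this
      have hf2 : ((2 * (n + 1)).factorial : ℚ)
          = (2 * n + 2) * (Nat.factorial (2 * n + 1) : ℚ) := by
        rw [show 2 * (n + 1) = 2 * n + 1 + 1 by ring, Nat.factorial_succ]
        push_cast
        ring
      rw [t_rec n, ih, hf]
      linear_combination -(2 * (n : ℚ) + 2) * (Nat.factorial (2 * n + 1) : ℚ) * hk - hcb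
        + c (n + 1) * hf2
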